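/- Define σ : ℍ × ℍ → ℝ by σ(q, p) = |q − p| if p and q lie on a common complex plane L_I = ℝ + I·ℝ for some I ∈ 𝕊, and σ(q, p) = √([Re(q) − Re(p)]² + [|Im(q)| + |Im(p)|]²) otherwise. Then σ is a distance (metric) on ℍ: it is nonnegative, vanishes exactly on the diagonal, is symmetric, and satisfies the triangle inequality. -/

import Mathlib

open Quaternion

/-- `p` and `q` lie on a common complex plane `L_I = ℝ + Iℝ` for some imaginary unit `I`. -/
def SameSlice (q p : ℍ[ℝ]) : Prop :=
  ∃ I : ℍ[ℝ], I ^ 2 = -1 ∧ (∃ a b : ℝ, q = (a : ℍ[ℝ]) + b • I) ∧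
    (∃ c d : ℝ, p = (c : ℍ[ℝ]) + d • I)

-- The distance `σ` of Gentili–Stoppato.
open Classical in
noncomputable def sigmaDist (q p : ℍ[ℝ]) : ℝ :=
  if SameSlice q p then ‖q - p‖
  else Real.sqrt ((q.re - p.re) ^ 2 + (‖q.im‖ + ‖p.im‖) ^ 2)

lemma re_eq_zero_of_sq {I : ℍ[ℝ]} (h : I ^ 2 = -1) : I.re = 0 := by
  have h1 : (I * I).re = -1 := by rw [← sq, h]; simp
  have h2 : normSq I * normSq I = 1 := by
    rw [← map_mul, ← sq, h]; simp [normSq_neg]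
  have h3 : normSq I = 1 := by nlinarith [normSq_nonneg (a := I)]
  rw [normSq_def'] at h3
  rw [re_mul] at h1
  have : I.re ^ 2 = 0 := by nlinarith
  exact pow_eq_zero_iff (by norm_num) |>.mp this

lemma im_eq_self_of_sq {I : ℍ[ℝ]} (h : I ^ 2 = -1) : I.im = I := by
  conv_rhs => rw [← I.re_add_im]
  rw [re_eq_zero_of_sq h]
  simp

lemma sameSlice_of_im_zero {q p : ℍ[ℝ]} (hq : q.im = 0) (hp : p.im = 0) : SameSlice q p := by
  refine ⟨@id ℍ[ℝ] ⟨0,1,0,0⟩, ?_, ⟨q.re, 0, ?_⟩, ⟨p.re, 0, ?_⟩⟩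
  · ext <;> simp [sq, re_mul, imI_mul, imJ_mul, imK_mul] <;> simp [id]
  · rw [zero_smul, add_zero]; conv_lhs => rw [← q.re_add_im, hq]; rw [add_zero]
  · rw [zero_smul, add_zero]; conv_lhs => rw [← p.re_add_im, hp]; rw [add_zero]

lemma sameSlice_refl (q : ℍ[ℝ]) : SameSlice q q := by
  by_cases h : q.im = 0
  · exact sameSlice_of_im_zero h h
  · have hn : ‖q.im‖ ≠ 0 := by simpa using h
    refine ⟨‖q.im‖⁻¹ • q.im, ?_, ⟨q.re, ‖q.im‖, ?_⟩, ⟨q.re, ‖q.im‖, ?_⟩⟩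
    · rw [smul_pow, im_sq]
      have : normSq q.im = ‖q.im‖ ^ 2 := by rw [sq, normSq_eq_norm_mul_self]
      rw [this]
      rw [smul_neg, ← coe_mul_eq_smul]
      norm_cast
      field_simp
      norm_num
    all_goals
      rw [smul_smul, mul_inv_cancel₀ hn, one_smul, re_add_im]

lemma sameSlice_symm {q p : ℍ[ℝ]} (h : SameSlice q p) : SameSlice p q := by
  obtain ⟨I, hI, h1, h2⟩ := h
  exact ⟨I, hI, h2, h1⟩

lemma sameSlice_trans {q s p : ℍ[ℝ]} (h1 : SameSlice q s) (h2 : SameSlice s p)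
    (hs : s.im ≠ 0) : SameSlice q p := by
  obtain ⟨I, hI, hq, c, d, hsI⟩ := h1
  obtain ⟨J, hJ, ⟨c', d', hsJ⟩, e, f, hp⟩ := h2
  have hImI : s.im = d • I := by
    rw [hsI]; simp [im_eq_self_of_sq hI]
  have hImJ : s.im = d' • J := by
    rw [hsJ]; simp [im_eq_self_of_sq hJ]
  have hd' : d' ≠ 0 := by rintro rfl; simp at hImJ; exact hs hImJ
  have hJI : J = (d'⁻¹ * d) • I := by
    have : d • I = d' • J := hImI ▸ hImJ
    rw [mul_smul, this, inv_smul_smul₀ hd']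
  exact ⟨I, hI, hq, ⟨e, f * (d'⁻¹ * d), by rw [hp, hJI, smul_smul]⟩⟩

lemma quat_norm_sq_eq (q : ℍ[ℝ]) : ‖q‖ ^ 2 = q.re ^ 2 + ‖q.im‖ ^ 2 := by
  have h1 : ‖q‖^2 = normSq q := by rw [sq, normSq_eq_norm_mul_self]
  have h2 : ‖q.im‖^2 = normSq q.im := by rw [sq, normSq_eq_norm_mul_self]
  rw [h1, h2, normSq_def', normSq_def']
  simp
  ring

lemma sqrt_triangle (a₁ b₁ a₂ b₂ : ℝ) :
    Real.sqrt ((a₁+a₂)^2+(b₁+b₂)^2) ≤ Real.sqrt (a₁^2+b₁^2) + Real.sqrt (a₂^2+b₂^2) := by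
  have h := norm_add_le (⟨a₁,b₁⟩ : ℂ) ⟨a₂,b₂⟩
  simpa [Complex.norm_def, Complex.normSq_apply, Complex.add_re, Complex.add_im, sq] using h

lemma norm_sub_ge (x y : ℍ[ℝ]) :
    Real.sqrt ((x.re - y.re)^2 + (‖x.im‖ - ‖y.im‖)^2) ≤ ‖x - y‖ := by
  rw [show ‖x - y‖ = Real.sqrt (‖x - y‖ ^ 2) from (Real.sqrt_sq (norm_nonneg _)).symm]
  apply Real.sqrt_le_sqrt
  rw [quat_norm_sq_eq (x - y), re_sub, im_sub]
  have h := abs_norm_sub_norm_le x.im y.im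
  nlinarith [sq_abs (‖x.im‖ - ‖y.im‖), abs_nonneg (‖x.im‖ - ‖y.im‖)]

lemma sigma_lower (x y : ℍ[ℝ]) (b : ℝ)
    (hb : b ^ 2 ≤ (‖x.im‖ - ‖y.im‖) ^ 2 ∨ (¬SameSlice x y ∧ b ^ 2 ≤ (‖x.im‖ + ‖y.im‖) ^ 2)) :
    Real.sqrt ((x.re - y.re) ^ 2 + b ^ 2) ≤ sigmaDist x y := by
  unfold sigmaDist
  split_ifs with h
  · rcases hb with hb | ⟨hn, _⟩
    · exact le_trans (Real.sqrt_le_sqrt (by linarith)) (norm_sub_ge x y)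
    · exact absurd h hn
  · apply Real.sqrt_le_sqrt
    have hss : (‖x.im‖ - ‖y.im‖) ^ 2 ≤ (‖x.im‖ + ‖y.im‖) ^ 2 := by
      nlinarith [norm_nonneg x.im, norm_nonneg y.im]
    rcases hb with hb | ⟨_, hb⟩ <;> linarith

lemma norm_le_sigma (x y : ℍ[ℝ]) : ‖x - y‖ ≤ sigmaDist x y := by
  unfold sigmaDist
  split_ifs with h
  · exact le_rfl
  · rw [show ‖x - y‖ = Real.sqrt (‖x - y‖ ^ 2) from (Real.sqrt_sq (norm_nonneg _)).symm]
    apply Real.sqrt_le_sqrt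
    rw [quat_norm_sq_eq (x - y), re_sub, im_sub]
    nlinarith [norm_sub_le x.im y.im, norm_nonneg (x.im - y.im), norm_nonneg x.im,
      norm_nonneg y.im]

lemma sigma_eq_of_not {x y : ℍ[ℝ]} (h : ¬SameSlice x y) :
    sigmaDist x y = Real.sqrt ((x.re - y.re) ^ 2 + (‖x.im‖ + ‖y.im‖) ^ 2) := by
  unfold sigmaDist; rw [if_neg h]

theorem sigmaDist_is_metric :
    (∀ q p : ℍ[ℝ], 0 ≤ sigmaDist q p) ∧
    (∀ q p : ℍ[ℝ], sigmaDist q p = 0 ↔ q = p) ∧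
    (∀ q p : ℍ[ℝ], sigmaDist q p = sigmaDist p q) ∧
    (∀ q p s : ℍ[ℝ], sigmaDist q p ≤ sigmaDist q s + sigmaDist s p) := by
  refine ⟨?_, ?_, ?_, ?_⟩
  · intro q p
    unfold sigmaDist
    split_ifs with h
    · exact norm_nonneg _
    · exact Real.sqrt_nonneg _
  · intro q p
    constructor
    · intro h0
      by_cases h : SameSlice q p
      · rw [sigmaDist, if_pos h, norm_eq_zero, sub_eq_zero] at h0
        exact h0
      · exfalso
        rw [sigma_eq_of_not h] at h0
        have h1 : (q.re - p.re) ^ 2 + (‖q.im‖ + ‖p.im‖) ^ 2 = 0 := by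
          have h2 := Real.sqrt_eq_zero'.mp h0
          nlinarith [sq_nonneg (q.re - p.re), sq_nonneg (‖q.im‖ + ‖p.im‖)]
        have hq : ‖q.im‖ = 0 := by
          nlinarith [sq_nonneg (q.re - p.re), norm_nonneg q.im, norm_nonneg p.im]
        have hp : ‖p.im‖ = 0 := by
          nlinarith [sq_nonneg (q.re - p.re), norm_nonneg q.im, norm_nonneg p.im]
        exact h (sameSlice_of_im_zero (norm_eq_zero.mp hq) (norm_eq_zero.mp hp))
    · rintro rfl
      rw [sigmaDist, if_pos (sameSlice_refl q), sub_self, norm_zero]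
  · intro q p
    unfold sigmaDist
    by_cases h : SameSlice q p
    · rw [if_pos h, if_pos (sameSlice_symm h), norm_sub_rev]
    · rw [if_neg h, if_neg (fun hc => h (sameSlice_symm hc))]
      congr 1
      ring
  · intro q p s
    by_cases hqp : SameSlice q p
    · have e : sigmaDist q p = ‖q - p‖ := by rw [sigmaDist, if_pos hqp]
      rw [e]
      calc ‖q - p‖ ≤ ‖q - s‖ + ‖s - p‖ := by
              have := norm_add_le (q - s) (s - p)
              simpa using this
        _ ≤ sigmaDist q s + sigmaDist s p := add_le_add (norm_le_sigma q s) (norm_le_sigma s p)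
    · rw [sigma_eq_of_not hqp]
      obtain ⟨b₁, b₂, hb, hB1, hB2⟩ : ∃ b₁ b₂ : ℝ, ‖q.im‖ + ‖p.im‖ = b₁ + b₂ ∧
          Real.sqrt ((q.re - s.re) ^ 2 + b₁ ^ 2) ≤ sigmaDist q s ∧
          Real.sqrt ((s.re - p.re) ^ 2 + b₂ ^ 2) ≤ sigmaDist s p := by
        by_cases h1 : SameSlice q s <;> by_cases h2 : SameSlice s p
        · have hs0 : s.im = 0 := by
            by_contra hs0
            exact hqp (sameSlice_trans h1 h2 hs0)
          exact ⟨‖q.im‖, ‖p.im‖, rfl,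
            sigma_lower q s _ (Or.inl (by rw [hs0]; simp)),
            sigma_lower s p _ (Or.inl (by rw [hs0]; simp))⟩
        · exact ⟨‖q.im‖ - ‖s.im‖, ‖s.im‖ + ‖p.im‖, by ring,
            sigma_lower q s _ (Or.inl le_rfl),
            sigma_lower s p _ (Or.inr ⟨h2, le_rfl⟩)⟩
        · exact ⟨‖q.im‖ + ‖s.im‖, ‖p.im‖ - ‖s.im‖, by ring,
            sigma_lower q s _ (Or.inr ⟨h1, le_rfl⟩),
            sigma_lower s p _ (Or.inl (le_of_eq (by ring)))⟩
        · exact ⟨‖q.im‖ + ‖s.im‖, ‖p.im‖ - ‖s.im‖, by ring,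
            sigma_lower q s _ (Or.inr ⟨h1, le_rfl⟩),
            sigma_lower s p _ (Or.inr ⟨h2, by nlinarith [norm_nonneg s.im, norm_nonneg p.im]⟩)⟩
      calc Real.sqrt ((q.re - p.re) ^ 2 + (‖q.im‖ + ‖p.im‖) ^ 2)
          = Real.sqrt (((q.re - s.re) + (s.re - p.re)) ^ 2 + (b₁ + b₂) ^ 2) := by
            rw [← hb]; ring_nf
        _ ≤ Real.sqrt ((q.re - s.re) ^ 2 + b₁ ^ 2) + Real.sqrt ((s.re - p.re) ^ 2 + b₂ ^ 2) :=
            sqrt_triangle _ _ _ _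
        _ ≤ sigmaDist q s + sigmaDist s p := add_le_add hB1 hB2
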